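/- The extended Burgers flows commute: for all n, m ≥ 1, X_n(Q_{m−1}) − X_m(Q_{n−1}) = Q_{n−1}·∂(Q_{m−1}) − Q_{m−1}·∂(Q_{n−1}), where X_n(u) = ∂(Q_n) and Q_j = (∂+u)^j(1). -/
import Mathlib

lemma burgers_iter {R : Type*} [CommRing R] (d : R →+ R)
    (u : R) (Q : ℕ → R) (hQ : ∀ k, Q (k + 1) = d (Q k) + u * Q k) :
    ∀ a b, (fun x => d x + u * x)^[a] (Q b) = Q (a + b) := by
  intro a
  induction a with
  | zero => intro b; simp
  | succ a ih =>
      intro b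
      rw [Function.iterate_succ_apply]
      show (fun x => d x + u * x)^[a] (d (Q b) + u * Q b) = _
      rw [← hQ b, ih (b + 1)]
      congr 1
      omega

lemma burgers_X {R : Type*} [CommRing R] (d : R →+ R)
    (hleib : ∀ a b : R, d (a * b) = d a * b + a * d b)
    (u : R) (Q : ℕ → R) (hQ0 : Q 0 = 1) (hQ : ∀ k, Q (k + 1) = d (Q k) + u * Q k)
    (N : ℕ) (X : R →+ R)
    (hX_der : ∀ a b : R, X (a * b) = X a * b + a * X b)
    (hX_d : ∀ a : R, X (d a) = d (X a))
    (hX_u : X u = d (Q N)) :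
    ∀ k, X (Q k) = (fun x => d x + u * x)^[k] (Q N) - Q k * Q N := by
  have hX1 : X 1 = 0 := by
    have h := hX_der 1 1
    simpa using h
  intro k
  induction k with
  | zero => simp [hQ0, hX1]
  | succ k ih =>
      rw [hQ k, map_add, hX_d, hX_der, hX_u, ih, map_sub, hleib,
        Function.iterate_succ_apply']
      ring

theorem stmt7 {R : Type*} [CommRing R] (d : R →+ R)
    (hleib : ∀ a b : R, d (a * b) = d a * b + a * d b)
    (u : R) (Q : ℕ → R) (hQ0 : Q 0 = 1) (hQ : ∀ k, Q (k + 1) = d (Q k) + u * Q k)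
    (n m : ℕ) (hn : 1 ≤ n) (hm : 1 ≤ m)
    (Xn Xm : R →+ R)
    (hXn_der : ∀ a b : R, Xn (a * b) = Xn a * b + a * Xn b)
    (hXm_der : ∀ a b : R, Xm (a * b) = Xm a * b + a * Xm b)
    (hXn_d : ∀ a : R, Xn (d a) = d (Xn a))
    (hXm_d : ∀ a : R, Xm (d a) = d (Xm a))
    (hXn_u : Xn u = d (Q n)) (hXm_u : Xm u = d (Q m)) :
    Xn (Q (m - 1)) - Xm (Q (n - 1))
      = Q (n - 1) * d (Q (m - 1)) - Q (m - 1) * d (Q (n - 1)) := by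
  obtain ⟨n', rfl⟩ : ∃ n', n = n' + 1 := ⟨n - 1, by omega⟩
  obtain ⟨m', rfl⟩ : ∃ m', m = m' + 1 := ⟨m - 1, by omega⟩
  simp only [Nat.add_sub_cancel]
  rw [burgers_X d hleib u Q hQ0 hQ _ Xn hXn_der hXn_d hXn_u m',
      burgers_X d hleib u Q hQ0 hQ _ Xm hXm_der hXm_d hXm_u n',
      burgers_iter d u Q hQ, burgers_iter d u Q hQ]
  have h1 : m' + (n' + 1) = n' + (m' + 1) := by omega
  rw [h1, hQ n', hQ m']
  ring
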